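/- Let Z_P ∈ ℝ^{a×N}, U_F ∈ ℝ^{b×N}, Y_F ∈ ℝ^{c×N} admit an LQ decomposition as follows: there exist L_{11} ∈ ℝ^{a×a}, L_{21} ∈ ℝ^{b×a}, L_{22} ∈ ℝ^{b×b}, L_{31} ∈ ℝ^{c×a}, L_{32} ∈ ℝ^{c×b}, L_{33} ∈ ℝ^{c×c} with L_{11} and L_{22} invertible, and Q_1 ∈ ℝ^{a×N}, Q_2 ∈ ℝ^{b×N}, Q_3 ∈ ℝ^{c×N} with orthonormal stacked rows (Q_i Q_iᵀ = I, Q_i Q_jᵀ = 0 for i ≠ j), such that Z_P = L_{11}Q_1, U_F = L_{21}Q_1 + L_{22}Q_2, Y_F = L_{31}Q_1 + L_{32}Q_2 + L_{33}Q_3. Let H := [Z_P; U_F] and Π := Hᵀ(HHᵀ)^{−1}H. Suppose Ŵ ∈ ℝ^{c×c} is invertible and Φ_P ∈ ℝ^{c×a}, Φ_u ∈ ℝ^{c×b} satisfy Y_F Π = Ŵ^{−1} Φ_P Z_P + Ŵ^{−1} Φ_u U_F. Then Φ_u = Ŵ L_{32} L_{22}^{−1} and Φ_P = Ŵ (L_{31}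 − L_{32}L_{22}^{−1}L_{21}) L_{11}^{−1}. -/

import Mathlib

open Matrix

/-- given an LQ decomposition as in Statement 10, if `Ŵ` is invertible and
`Φ_P, Φ_u` satisfy `Y_F Π = Ŵ⁻¹ Φ_P Z_P + Ŵ⁻¹ Φ_u U_F` (with `H = [Z_P; U_F]` and
`Π := Hᵀ(HHᵀ)⁻¹H`), then `Φ_u = Ŵ L₃₂ L₂₂⁻¹` and
`Φ_P = Ŵ (L₃₁ − L₃₂L₂₂⁻¹L₂₁) L₁₁⁻¹`. -/
theorem stmt_11 (a b c N : ℕ)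
    (ZP : Matrix (Fin a) (Fin N) ℝ) (UF : Matrix (Fin b) (Fin N) ℝ)
    (YF : Matrix (Fin c) (Fin N) ℝ)
    (L11 : Matrix (Fin a) (Fin a) ℝ) (L21 : Matrix (Fin b) (Fin a) ℝ)
    (L22 : Matrix (Fin b) (Fin b) ℝ) (L31 : Matrix (Fin c) (Fin a) ℝ)
    (L32 : Matrix (Fin c) (Fin b) ℝ) (L33 : Matrix (Fin c) (Fin c) ℝ)
    (hL11 : IsUnit L11) (hL22 : IsUnit L22)
    (Q1 : Matrix (Fin a) (Fin N) ℝ) (Q2 : Matrix (Fin b) (Fin N) ℝ)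
    (Q3 : Matrix (Fin c) (Fin N) ℝ)
    (h11 : Q1 * Q1ᵀ = 1) (h22 : Q2 * Q2ᵀ = 1) (h33 : Q3 * Q3ᵀ = 1)
    (h12 : Q1 * Q2ᵀ = 0) (h13 : Q1 * Q3ᵀ = 0) (h23 : Q2 * Q3ᵀ = 0)
    (hZP : ZP = L11 * Q1) (hUF : UF = L21 * Q1 + L22 * Q2)
    (hYF : YF = L31 * Q1 + L32 * Q2 + L33 * Q3)
    (What : Matrix (Fin c) (Fin c) ℝ) (hWhat : IsUnit What)
    (ΦP : Matrix (Fin c) (Fin a) ℝ) (Φu : Matrix (Fin c) (Fin b) ℝ)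
    (hproj : YF * ((Matrix.fromRows ZP UF)ᵀ *
        (Matrix.fromRows ZP UF * (Matrix.fromRows ZP UF)ᵀ)⁻¹ * Matrix.fromRows ZP UF)
      = What⁻¹ * ΦP * ZP + What⁻¹ * Φu * UF) :
    Φu = What * L32 * L22⁻¹ ∧
    ΦP = What * (L31 - L32 * L22⁻¹ * L21) * L11⁻¹ := by
  -- auxiliary orthogonality facts
  have h21 : Q2 * Q1ᵀ = 0 := by
    have := congrArg Matrix.transpose h12; simpa [Matrix.transpose_mul] using this
  have h31 : Q3 * Q1ᵀ = 0 := by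
    have := congrArg Matrix.transpose h13; simpa [Matrix.transpose_mul] using this
  have h32 : Q3 * Q2ᵀ = 0 := by
    have := congrArg Matrix.transpose h23; simpa [Matrix.transpose_mul] using this
  set H : Matrix (Fin a ⊕ Fin b) (Fin N) ℝ := Matrix.fromRows ZP UF with hH
  set L : Matrix (Fin a ⊕ Fin b) (Fin a ⊕ Fin b) ℝ := Matrix.fromBlocks L11 0 L21 L22 with hL
  set Qs : Matrix (Fin a ⊕ Fin b) (Fin N) ℝ := Matrix.fromRows Q1 Q2 with hQs
  have hHLQ : H = L * Qs := by
    rw [hH, hL, hQs, Matrix.fromBlocks_mul_fromRows, hZP, hUF]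
    simp
  have hQQ : Qs * Qsᵀ = 1 := by
    rw [hQs, Matrix.transpose_fromRows, Matrix.fromRows_mul_fromCols,
      h11, h12, h21, h22]
    exact Matrix.fromBlocks_one
  have hLunit : IsUnit L := by
    rw [hL]
    exact Matrix.isUnit_fromBlocks_zero₁₂.mpr ⟨hL11, hL22⟩
  have hLdet : IsUnit L.det := (Matrix.isUnit_iff_isUnit_det L).mp hLunit
  have hHHT : H * Hᵀ = L * Lᵀ := by
    rw [hHLQ, Matrix.transpose_mul]
    calc L * Qs * (Qsᵀ * Lᵀ) = L * (Qs * Qsᵀ) * Lᵀ := by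
          simp only [Matrix.mul_assoc]
      _ = L * Lᵀ := by rw [hQQ]; simp
  have hPi : Hᵀ * (H * Hᵀ)⁻¹ * H = Q1ᵀ * Q1 + Q2ᵀ * Q2 := by
    have hLTdet : IsUnit Lᵀ.det := by
      rwa [Matrix.det_transpose]
    rw [hHHT, Matrix.mul_inv_rev]
    conv_lhs => rw [hHLQ]
    rw [Matrix.transpose_mul]
    have : Qsᵀ * Lᵀ * (Lᵀ⁻¹ * L⁻¹) * (L * Qs) = Qsᵀ * Qs := by
      calc Qsᵀ * Lᵀ * (Lᵀ⁻¹ * L⁻¹) * (L * Qs)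
          = Qsᵀ * (Lᵀ * Lᵀ⁻¹) * ((L⁻¹ * L) * Qs) := by
            simp only [Matrix.mul_assoc]
        _ = Qsᵀ * Qs := by
            rw [Matrix.mul_nonsing_inv _ hLTdet, Matrix.nonsing_inv_mul _ hLdet]
            simp
    rw [this, hQs, Matrix.transpose_fromRows, Matrix.fromCols_mul_fromRows]
  have hYFPi : YF * (Hᵀ * (H * Hᵀ)⁻¹ * H) = L31 * Q1 + L32 * Q2 := by
    rw [hPi, hYF]
    have e1 : Q1 * (Q1ᵀ * Q1 + Q2ᵀ * Q2) = Q1 := by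
      rw [Matrix.mul_add, ← Matrix.mul_assoc, ← Matrix.mul_assoc, h11, h12]
      simp
    have e2 : Q2 * (Q1ᵀ * Q1 + Q2ᵀ * Q2) = Q2 := by
      rw [Matrix.mul_add, ← Matrix.mul_assoc, ← Matrix.mul_assoc, h21, h22]
      simp
    have e3 : Q3 * (Q1ᵀ * Q1 + Q2ᵀ * Q2) = 0 := by
      rw [Matrix.mul_add, ← Matrix.mul_assoc, ← Matrix.mul_assoc, h31, h32]
      simp
    rw [Matrix.add_mul, Matrix.add_mul, Matrix.mul_assoc, Matrix.mul_assoc,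
      Matrix.mul_assoc, e1, e2, e3]
    simp
  have key : L31 * Q1 + L32 * Q2
      = What⁻¹ * ΦP * (L11 * Q1) + What⁻¹ * Φu * (L21 * Q1 + L22 * Q2) := by
    rw [← hZP, ← hUF, ← hproj, ← hYFPi, hH]
  -- multiply by Q2ᵀ on the right
  have Wdet : IsUnit What.det := (Matrix.isUnit_iff_isUnit_det What).mp hWhat
  have L22det : IsUnit L22.det := (Matrix.isUnit_iff_isUnit_det L22).mp hL22
  have L11det : IsUnit L11.det := (Matrix.isUnit_iff_isUnit_det L11).mp hL11
  have key2 : L32 = What⁻¹ * Φu * L22 := by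
    have h := congrArg (· * Q2ᵀ) key
    simp only [Matrix.add_mul, Matrix.mul_assoc] at h
    rw [h12, h22] at h
    simpa [Matrix.mul_assoc] using h
  have hΦu : Φu = What * L32 * L22⁻¹ := by
    have h := congrArg (fun M => What * M * L22⁻¹) key2
    beta_reduce at h
    rw [h]
    symm
    calc What * (What⁻¹ * Φu * L22) * L22⁻¹
        = (What * What⁻¹) * Φu * (L22 * L22⁻¹) := by simp only [Matrix.mul_assoc]
      _ = Φu := by
          rw [Matrix.mul_nonsing_inv _ Wdet, Matrix.mul_nonsing_inv _ L22det]; simp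
  have key1 : L31 = What⁻¹ * ΦP * L11 + What⁻¹ * Φu * L21 := by
    have h := congrArg (· * Q1ᵀ) key
    simp only [Matrix.add_mul, Matrix.mul_assoc] at h
    rw [h11, h21] at h
    simpa [Matrix.mul_assoc] using h
  refine ⟨hΦu, ?_⟩
  have hW : ∀ (M : Matrix (Fin c) (Fin b) ℝ), What⁻¹ * (What * M) = M := fun M => by
    rw [← Matrix.mul_assoc, Matrix.nonsing_inv_mul _ Wdet, Matrix.one_mul]
  have key1' : What⁻¹ * ΦP * L11 = L31 - L32 * L22⁻¹ * L21 := by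
    rw [hΦu] at key1
    rw [eq_sub_iff_add_eq, key1]
    rw [Matrix.mul_assoc What L32 L22⁻¹, hW]
  have h := congrArg (fun M => What * M * L11⁻¹) key1'
  beta_reduce at h
  rw [← h]
  symm
  calc What * (What⁻¹ * ΦP * L11) * L11⁻¹
      = (What * What⁻¹) * ΦP * (L11 * L11⁻¹) := by simp only [Matrix.mul_assoc]
    _ = ΦP := by
        rw [Matrix.mul_nonsing_inv _ Wdet, Matrix.mul_nonsing_inv _ L11det]; simp
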